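/- For every q̃ ∈ (3/4, 1), the solution set {ψ ∈ Ψ : T⁰¹(ψ) = q̃^(−1/2) and T¹¹(ψ) = 1} equals exactly {ψ₋(q̃), ψ₊(q̃)}, and ψ₋(q̃) ≠ ψ₊(q̃); in particular ψ₋(q̃) and ψ₊(q̃) are the only rest points of the profile ODE. -/

import Mathlib

open Real Matrix Filter Topology Set

noncomputable section

/-- The state space condition `ψ⁰ > |ψ¹|`. -/
def StateSpace (ψ : Fin 2 → ℝ) : Prop := |ψ 1| < ψ 0

/-- Temperature variable `θ(ψ) = ((ψ⁰)² − (ψ¹)²)^(−1/2)`. -/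
def θf (ψ : Fin 2 → ℝ) : ℝ := (Real.sqrt ((ψ 0) ^ 2 - (ψ 1) ^ 2))⁻¹

/-- `u(ψ) = θ(ψ) ψ⁰`. -/
def uf (ψ : Fin 2 → ℝ) : ℝ := θf ψ * ψ 0

/-- `v(ψ) = θ(ψ) ψ¹`. -/
def vf (ψ : Fin 2 → ℝ) : ℝ := θf ψ * ψ 1

/-- Ideal stress component `T⁰¹`. -/
def T01 (ψ : Fin 2 → ℝ) : ℝ := (4 / 3) * (θf ψ) ^ 4 * uf ψ * vf ψ

/-- Ideal stress component `T¹¹`. -/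
def T11 (ψ : Fin 2 → ℝ) : ℝ := (θf ψ) ^ 4 * ((4 / 3) * (vf ψ) ^ 2 + 1 / 3)

/-- `u = √(1+v²)` as a function of the velocity `v`. -/
def uu (v : ℝ) : ℝ := Real.sqrt (1 + v ^ 2)

/-- Viscosity matrix `B̃_visc(v)`. -/
def Bvisc (v : ℝ) : Matrix (Fin 2) (Fin 2) ℝ :=
  !![(uu v) ^ 2 * v ^ 2, -((uu v) ^ 3 * v); -((uu v) ^ 3 * v), (uu v) ^ 4]

/-- Thermal regulator matrix `B_ther(v)`. -/
def Bther (v : ℝ) : Matrix (Fin 2) (Fin 2) ℝ :=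
  !![16 * (uu v) ^ 2 * v ^ 2, -(4 * uu v * v * (4 * v ^ 2 + 1));
     -(4 * uu v * v * (4 * v ^ 2 + 1)), (4 * v ^ 2 + 1) ^ 2]

/-- Velocity regulator matrix `B_velo(v)`. -/
def Bvelo (v : ℝ) : Matrix (Fin 2) (Fin 2) ℝ :=
  !![((uu v) ^ 2 + v ^ 2) ^ 2, -(2 * ((uu v) ^ 2 + v ^ 2) * uu v * v);
     -(2 * ((uu v) ^ 2 + v ^ 2) * uu v * v), 4 * (uu v) ^ 2 * v ^ 2]

/-- The full dissipation matrix `B(v) = η̃ B̃_visc − μ B_ther − ν B_velo`. -/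
def Bmat (η μ ν v : ℝ) : Matrix (Fin 2) (Fin 2) ℝ :=
  η • Bvisc v - μ • Bther v - ν • Bvelo v

/-- The (rescaled) flux Jacobian `A(v)`. -/
def Amat (v : ℝ) : Matrix (Fin 2) (Fin 2) ℝ :=
  !![v * (6 * (uu v) ^ 2 - 1), -(uu v * (6 * v ^ 2 + 1));
     -(uu v * (6 * v ^ 2 + 1)), v * (6 * v ^ 2 + 3)]

/-- Upstream velocity `v₋(q̃)`. -/
def vminus (q : ℝ) : ℝ :=
  Real.sqrt (((2 * q - 1) + Real.sqrt (q * (4 * q - 3))) / (4 * (1 - q)))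

/-- Downstream velocity `v₊(q̃)`. -/
def vplus (q : ℝ) : ℝ :=
  Real.sqrt (((2 * q - 1) - Real.sqrt (q * (4 * q - 3))) / (4 * (1 - q)))

/-- The state `ψ` with velocity `v` on the Hugoniot curve `T¹¹ = 1`. -/
def psiOf (v : ℝ) : Fin 2 → ℝ :=
  ((4 / 3) * v ^ 2 + 1 / 3) ^ ((1 : ℝ) / 4) • ![Real.sqrt (1 + v ^ 2), v]

/-- Upstream state `ψ₋(q̃)`. -/
def psiMinus (q : ℝ) : Fin 2 → ℝ := psiOf (vminus q)

/-- Downstream state `ψ₊(q̃)`. -/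
def psiPlus (q : ℝ) : Fin 2 → ℝ := psiOf (vplus q)

/-- `ψ : ℝ → Ψ` is a C¹ solution of the profile ODE
`B(v(ψ))·ψ' = (T⁰¹(ψ) − q̃^(−1/2), T¹¹(ψ) − 1)`. -/
def ProfileSolution (η μ ν q : ℝ) (ψ : ℝ → Fin 2 → ℝ) : Prop :=
  ContDiff ℝ 1 ψ ∧ (∀ t, StateSpace (ψ t)) ∧
  ∀ t, (Bmat η μ ν (vf (ψ t))).mulVec (deriv ψ t) =
    ![T01 (ψ t) - (Real.sqrt q)⁻¹, T11 (ψ t) - 1]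

end


noncomputable section

namespace RestPointsAux

lemma c_pos (v : ℝ) : (0:ℝ) < ((4 / 3) * v ^ 2 + 1 / 3) ^ ((1 : ℝ) / 4) :=
  Real.rpow_pos_of_pos (by positivity) _

lemma c_pow (v : ℝ) : (((4 / 3) * v ^ 2 + 1 / 3) ^ ((1 : ℝ) / 4)) ^ (4:ℕ) = (4 / 3) * v ^ 2 + 1 / 3 := by
  rw [← Real.rpow_natCast (((4 / 3) * v ^ 2 + 1 / 3) ^ ((1 : ℝ) / 4)) 4,
      ← Real.rpow_mul (by positivity)]
  norm_num

lemma psiOf_zero (v : ℝ) : psiOf v 0 = ((4 / 3) * v ^ 2 + 1 / 3) ^ ((1 : ℝ) / 4) * Real.sqrt (1 + v ^ 2) := by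
  simp [psiOf]

lemma psiOf_one (v : ℝ) : psiOf v 1 = ((4 / 3) * v ^ 2 + 1 / 3) ^ ((1 : ℝ) / 4) * v := by
  simp [psiOf]

lemma sq_sqrt1v (v : ℝ) : Real.sqrt (1 + v ^ 2) ^ 2 = 1 + v ^ 2 :=
  Real.sq_sqrt (by positivity)

lemma theta_psiOf (v : ℝ) : θf (psiOf v) = (((4 / 3) * v ^ 2 + 1 / 3) ^ ((1 : ℝ) / 4))⁻¹ := by
  set c := ((4 / 3) * v ^ 2 + 1 / 3) ^ ((1 : ℝ) / 4) with hc
  have hcp := c_pos v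
  rw [θf, psiOf_zero, psiOf_one]
  have : (c * Real.sqrt (1 + v ^ 2)) ^ 2 - (c * v) ^ 2 = c ^ 2 := by
    rw [mul_pow, mul_pow, sq_sqrt1v]; ring
  rw [this, Real.sqrt_sq hcp.le]

lemma vf_psiOf (v : ℝ) : vf (psiOf v) = v := by
  rw [vf, theta_psiOf, psiOf_one]
  field_simp

lemma uf_psiOf (v : ℝ) : uf (psiOf v) = Real.sqrt (1 + v ^ 2) := by
  rw [uf, theta_psiOf, psiOf_zero]
  field_simp

lemma T11_psiOf (v : ℝ) : T11 (psiOf v) = 1 := by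
  rw [T11, theta_psiOf, vf_psiOf, inv_pow]
  rw [c_pow]
  have : (4 / 3) * v ^ 2 + 1 / 3 ≠ 0 := by positivity
  field_simp

lemma state_psiOf (v : ℝ) : StateSpace (psiOf v) := by
  rw [StateSpace, psiOf_zero, psiOf_one, abs_mul, abs_of_pos (c_pos v)]
  have hcp := c_pos v
  have h : |v| < Real.sqrt (1 + v ^ 2) := by
    rw [show (1:ℝ) + v^2 = 1 + |v|^2 by rw [sq_abs]]
    nlinarith [Real.sq_sqrt (show (0:ℝ) ≤ 1 + |v|^2 by positivity),
      Real.sqrt_nonneg (1 + |v|^2), abs_nonneg v]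
  exact (mul_lt_mul_iff_right₀ hcp).2 h

lemma T01_psiOf (v : ℝ) : T01 (psiOf v) = 4 * v * Real.sqrt (1 + v ^ 2) / (4 * v ^ 2 + 1) := by
  rw [T01, theta_psiOf, vf_psiOf, uf_psiOf, inv_pow, c_pow]
  have : (4:ℝ) * v ^ 2 + 1 ≠ 0 := by positivity
  field_simp

section
variable {q : ℝ} (hq3 : 3/4 < q) (hq1 : q < 1)
include hq3 hq1

lemma hr2 : Real.sqrt (q * (4 * q - 3)) ^ 2 = q * (4 * q - 3) :=
  Real.sq_sqrt (by nlinarith)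

omit hq1 in
lemma hrpos : 0 < Real.sqrt (q * (4 * q - 3)) :=
  Real.sqrt_pos.2 (by nlinarith)

lemma hrlt : Real.sqrt (q * (4 * q - 3)) < 2 * q - 1 := by
  rw [show (2*q-1) = Real.sqrt ((2*q-1)^2) from (Real.sqrt_sq (by linarith)).symm]
  apply Real.sqrt_lt_sqrt (by nlinarith)
  nlinarith

lemma ha_pos : 0 < ((2 * q - 1) + Real.sqrt (q * (4 * q - 3))) / (4 * (1 - q)) := by
  have := hrpos hq3
  apply div_pos (by linarith) (by linarith)

lemma hb_pos : 0 < ((2 * q - 1) - Real.sqrt (q * (4 * q - 3))) / (4 * (1 - q)) := by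
  have := hrlt hq3 hq1
  apply div_pos (by linarith) (by linarith)

lemma vminus_pos : 0 < vminus q := Real.sqrt_pos.2 (ha_pos hq3 hq1)
lemma vplus_pos : 0 < vplus q := Real.sqrt_pos.2 (hb_pos hq3 hq1)

lemma vminus_sq : (vminus q) ^ 2 = ((2 * q - 1) + Real.sqrt (q * (4 * q - 3))) / (4 * (1 - q)) :=
  Real.sq_sqrt (ha_pos hq3 hq1).le
lemma vplus_sq : (vplus q) ^ 2 = ((2 * q - 1) - Real.sqrt (q * (4 * q - 3))) / (4 * (1 - q)) :=
  Real.sq_sqrt (hb_pos hq3 hq1).le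

lemma vplus_lt_vminus : vplus q < vminus q := by
  apply Real.sqrt_lt_sqrt (hb_pos hq3 hq1).le
  have := hrpos hq3
  gcongr
  · linarith

lemma eq_vminus : 16 * q * (vminus q)^2 * (1 + (vminus q)^2) = (4 * (vminus q)^2 + 1)^2 := by
  set r := Real.sqrt (q * (4 * q - 3)) with hrdef
  have h2 : r ^ 2 = q * (4 * q - 3) := hr2 hq3 hq1
  have h1 : 4*(1-q) * (vminus q)^2 = 2*q-1 + r := by
    rw [vminus_sq hq3 hq1, mul_comm, div_mul_cancel₀ _ (by nlinarith : (4:ℝ)*(1-q) ≠ 0)]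
  have hkey : (1-q) * (16 * q * (vminus q)^2 * (1 + (vminus q)^2) - (4 * (vminus q)^2 + 1)^2) = 0 := by
    linear_combination (2*q-1-r - 4*(1-q)*(vminus q)^2) * h1 - h2
  have h1q : (1:ℝ) - q ≠ 0 := by linarith
  rcases mul_eq_zero.1 hkey with h | h
  · exact absurd h h1q
  · linarith

lemma eq_vplus : 16 * q * (vplus q)^2 * (1 + (vplus q)^2) = (4 * (vplus q)^2 + 1)^2 := by
  set r := Real.sqrt (q * (4 * q - 3)) with hrdef
  have h2 : r ^ 2 = q * (4 * q - 3) := hr2 hq3 hq1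
  have h1 : 4*(1-q) * (vplus q)^2 = 2*q-1 - r := by
    rw [vplus_sq hq3 hq1, mul_comm, div_mul_cancel₀ _ (by nlinarith : (4:ℝ)*(1-q) ≠ 0)]
  have hkey : (1-q) * (16 * q * (vplus q)^2 * (1 + (vplus q)^2) - (4 * (vplus q)^2 + 1)^2) = 0 := by
    linear_combination (2*q-1+r - 4*(1-q)*(vplus q)^2) * h1 - h2
  have h1q : (1:ℝ) - q ≠ 0 := by linarith
  rcases mul_eq_zero.1 hkey with h | h
  · exact absurd h h1q
  · linarith

lemma roots (v : ℝ) (hv : 0 < v) (heq : 16 * q * v^2 * (1 + v^2) = (4 * v^2 + 1)^2) :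
    v = vminus q ∨ v = vplus q := by
  set r := Real.sqrt (q * (4 * q - 3)) with hrdef
  have h2 : r ^ 2 = q * (4 * q - 3) := hr2 hq3 hq1
  have h4 : (4:ℝ)*(1-q) ≠ 0 := by nlinarith
  have quad : 16*(1-q)*(v^2)^2 - 8*(2*q-1)*(v^2) + 1 = 0 := by linear_combination -heq
  have hprod : (4*(1-q)*v^2 - (2*q-1+r)) * (4*(1-q)*v^2 - (2*q-1-r)) = 0 := by
    linear_combination (1-q)*quad - h2
  rcases mul_eq_zero.1 hprod with h | h
  · left
    have hs : v^2 = (2*q-1+r)/(4*(1-q)) := by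
      rw [eq_div_iff h4]; linarith
    rw [← Real.sqrt_sq hv.le, hs, vminus]
  · right
    have hs : v^2 = (2*q-1-r)/(4*(1-q)) := by
      rw [eq_div_iff h4]; linarith
    rw [← Real.sqrt_sq hv.le, hs, vplus]

end

lemma T01_forward {q : ℝ} (hq0 : 0 < q) (v : ℝ) (hv : 0 < v)
    (heq : 16 * q * v^2 * (1 + v^2) = (4 * v^2 + 1)^2) :
    T01 (psiOf v) = (Real.sqrt q)⁻¹ := by
  set u := Real.sqrt (1 + v ^ 2) with hu
  have hu2 : u ^ 2 = 1 + v ^ 2 := Real.sq_sqrt (by positivity)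
  have hupos : 0 < u := Real.sqrt_pos.2 (by positivity)
  have hsq : 0 < Real.sqrt q := Real.sqrt_pos.2 hq0
  have hq' : (Real.sqrt q) ^ 2 = q := Real.sq_sqrt hq0.le
  have e2 : (4 * Real.sqrt q * v * u) ^ 2 = (4 * v ^ 2 + 1) ^ 2 := by
    linear_combination 16*v^2*u^2*hq' + 16*q*v^2*hu2 + heq
  have key : 4 * Real.sqrt q * v * u = 4 * v ^ 2 + 1 := by
    have h := congrArg Real.sqrt e2
    rwa [Real.sqrt_sq (by positivity), Real.sqrt_sq (by positivity)] at h
  rw [T01_psiOf, ← hu]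
  rw [div_eq_iff (by positivity : (4:ℝ) * v ^ 2 + 1 ≠ 0)]
  rw [inv_mul_eq_div, eq_div_iff hsq.ne']
  linarith [key]

lemma T01_backward {q : ℝ} (hq0 : 0 < q) (v : ℝ)
    (hT : T01 (psiOf v) = (Real.sqrt q)⁻¹) :
    0 < v ∧ 16 * q * v^2 * (1 + v^2) = (4 * v^2 + 1)^2 := by
  set u := Real.sqrt (1 + v ^ 2) with hu
  have hu2 : u ^ 2 = 1 + v ^ 2 := Real.sq_sqrt (by positivity)
  have hupos : 0 < u := Real.sqrt_pos.2 (by positivity)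
  have hsq : 0 < Real.sqrt q := Real.sqrt_pos.2 hq0
  have hq' : (Real.sqrt q) ^ 2 = q := Real.sq_sqrt hq0.le
  rw [T01_psiOf, ← hu] at hT
  have hpos : 0 < 4 * v * u / (4 * v ^ 2 + 1) := hT ▸ inv_pos.2 hsq
  have hden : (0:ℝ) < 4 * v ^ 2 + 1 := by positivity
  have hnum : 0 < 4 * v * u := (div_pos_iff.1 hpos).elim (fun h => h.1) (fun h => absurd h.2 (by linarith))
  have hv : 0 < v := by nlinarith
  refine ⟨hv, ?_⟩
  rw [div_eq_iff hden.ne', inv_mul_eq_div, eq_div_iff hsq.ne'] at hT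
  linear_combination (4*v*u*Real.sqrt q + (4*v^2+1))*hT - 16*v^2*u^2*hq' - 16*q*v^2*hu2

lemma eq_psiOf (ψ : Fin 2 → ℝ) (hS : StateSpace ψ) (hT : T11 ψ = 1) : ψ = psiOf (vf ψ) := by
  have h0 : 0 < ψ 0 := lt_of_le_of_lt (abs_nonneg _) hS
  have habs := abs_lt.1 hS
  have hd : 0 < ψ 0 ^ 2 - ψ 1 ^ 2 := by nlinarith [habs.1, habs.2]
  set s := Real.sqrt (ψ 0 ^ 2 - ψ 1 ^ 2) with hsdef
  have hs : 0 < s := Real.sqrt_pos.2 hd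
  have hs2 : s ^ 2 = ψ 0 ^ 2 - ψ 1 ^ 2 := Real.sq_sqrt hd.le
  have hθ : θf ψ = s⁻¹ := rfl
  have hc : (4 / 3) * (vf ψ) ^ 2 + 1 / 3 = s ^ 4 := by
    rw [T11, hθ, inv_pow] at hT
    field_simp at hT
    linarith
  have hc4 : ((4 / 3) * (vf ψ) ^ 2 + 1 / 3) ^ ((1:ℝ)/4) = s := by
    rw [hc, ← Real.rpow_natCast s 4, ← Real.rpow_mul hs.le]
    norm_num
  have hv : vf ψ = ψ 1 / s := by rw [vf, hθ, inv_mul_eq_div]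
  have h1v : Real.sqrt (1 + (vf ψ)^2) = ψ 0 / s := by
    have heq1 : 1 + (vf ψ)^2 = (ψ 0 / s)^2 := by
      rw [hv, div_pow, div_pow, eq_div_iff (by positivity : s^2 ≠ 0)]
      field_simp
      linarith [hs2]
    rw [heq1, Real.sqrt_sq (by positivity)]
  funext i
  fin_cases i
  · show ψ 0 = psiOf (vf ψ) 0
    rw [psiOf_zero, hc4, h1v, mul_div_cancel₀ _ hs.ne']
  · show ψ 1 = psiOf (vf ψ) 1
    rw [psiOf_one, hc4, hv, mul_div_cancel₀ _ hs.ne']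

end RestPointsAux

end

/-- For `q̃ ∈ (3/4,1)` the rest points of the profile ODE are exactly `ψ₋(q̃)` and `ψ₊(q̃)`. -/
theorem rest_points_are_exactly_psi_pm (q : ℝ) (hq : q ∈ Set.Ioo (3 / 4 : ℝ) 1) :
    {ψ : Fin 2 → ℝ | StateSpace ψ ∧ T01 ψ = (Real.sqrt q)⁻¹ ∧ T11 ψ = 1} =
      {psiMinus q, psiPlus q} ∧ psiMinus q ≠ psiPlus q := by
  obtain ⟨hq3, hq1⟩ := hq
  have hq0 : (0:ℝ) < q := by linarith
  open RestPointsAux in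
  constructor
  · ext ψ
    simp only [Set.mem_setOf_eq, Set.mem_insert_iff, Set.mem_singleton_iff]
    constructor
    · rintro ⟨hS, hT01, hT11⟩
      have hψ := eq_psiOf ψ hS hT11
      rw [hψ] at hT01
      obtain ⟨hvpos, heq⟩ := T01_backward hq0 _ hT01
      rcases roots hq3 hq1 _ hvpos heq with h | h
      · left; rw [hψ, h]; rfl
      · right; rw [hψ, h]; rfl
    · rintro (h | h) <;> subst h
      · exact ⟨state_psiOf _, T01_forward hq0 _ (vminus_pos hq3 hq1) (eq_vminus hq3 hq1),
          T11_psiOf _⟩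
      · exact ⟨state_psiOf _, T01_forward hq0 _ (vplus_pos hq3 hq1) (eq_vplus hq3 hq1),
          T11_psiOf _⟩
  · intro h
    have h2 := congrArg vf h
    rw [psiMinus, psiPlus, vf_psiOf, vf_psiOf] at h2
    exact absurd h2 (vplus_lt_vminus hq3 hq1).ne'
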